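/- Assume there exists a non-negative measurable function g : [0,∞) → [0,∞) such that ρ₂(t) ≤ g(s) ρ₂(t−s) for all 0 ≤ s ≤ t < ∞, and let (R(t))_{t>0} be a strongly continuous family of bounded linear operators on X satisfying ∫_0^∞ (1+g(s)) ‖R(s)‖ ds < ∞. Let f ∈ PAP_0([0,∞), X, ρ₁, ρ₂) and define F(t) := ∫_0^t R(t−s) f(s) ds for t ≥ 0. Then F ∈ PAP_0([0,∞), X, ρ₁, ρ₂). -/

import Mathlib

open MeasureTheory Filter Set

/-- A weight on the half-line of class `U_{∞,p}`: locally integrable, a.e. positive on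
`[0,∞)`, and `∫_0^T ρ(t) dt → ∞` as `T → +∞`. -/
def IsWeightUInftyHalf (ρ : ℝ → ℝ) : Prop :=
  (∀ a b : ℝ, IntervalIntegrable ρ MeasureTheory.volume a b) ∧
  (∀ᵐ t : ℝ ∂(MeasureTheory.volume.restrict (Set.Ici (0:ℝ))), 0 < ρ t) ∧
  Filter.Tendsto (fun T : ℝ => ∫ t in (0:ℝ)..T, ρ t) Filter.atTop Filter.atTop

/-- Membership in `PAP_0([0,∞), X, ρ₁, ρ₂)`: bounded continuous functions
`f : [0,∞) → X` with `lim_{T→+∞} (1/∫_0^T ρ₁) ∫_0^T ‖f(t)‖ ρ₂(t) dt = 0`. -/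
def MemPAP0Half {X : Type*} [NormedAddCommGroup X] (ρ₁ ρ₂ : ℝ → ℝ) (f : ℝ → X) : Prop :=
  ContinuousOn f (Set.Ici (0:ℝ)) ∧ (∃ C : ℝ, ∀ t ≥ (0:ℝ), ‖f t‖ ≤ C) ∧
  Filter.Tendsto (fun T : ℝ =>
      (1 / ∫ t in (0:ℝ)..T, ρ₁ t) * ∫ t in (0:ℝ)..T, ‖f t‖ * ρ₂ t)
    Filter.atTop (nhds 0)

/-- Joint continuity of a strongly continuous operator family on a Banach space. -/
lemma strong_cont_joint {X : Type*} [NormedAddCommGroup X] [NormedSpace ℂ X] [CompleteSpace X]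
    (R : ℝ → X →L[ℂ] X) (hRcont : ∀ x : X, ContinuousOn (fun t : ℝ => R t x) (Set.Ioi 0)) :
    ContinuousOn (fun p : ℝ × X => R p.1 p.2) (Set.Ioi (0:ℝ) ×ˢ Set.univ) := by
  rintro ⟨t₀, x₀⟩ ⟨ht₀, -⟩
  simp only [Set.mem_Ioi] at ht₀
  -- compact neighborhood of t₀ inside Ioi 0
  set K : Set ℝ := Set.Icc (t₀/2) (t₀+1) with hK
  have hKsub : K ⊆ Set.Ioi 0 := fun u hu => lt_of_lt_of_le (by linarith) hu.1
  have hKcpt : IsCompact K := isCompact_Icc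
  -- uniform bound via Banach-Steinhaus
  obtain ⟨C, hC⟩ : ∃ C, ∀ u : K, ‖R u‖ ≤ C := by
    apply banach_steinhaus
    intro x
    obtain ⟨C, hC⟩ := hKcpt.exists_bound_of_continuousOn ((hRcont x).mono hKsub)
    exact ⟨C, fun u => hC u u.2⟩
  have hKnhds : K ∈ nhds t₀ := by
    rw [hK]
    exact Icc_mem_nhds (by linarith) (by linarith)
  -- decompose
  have h1 : Filter.Tendsto (fun p : ℝ × X => R p.1 x₀) (nhds (t₀, x₀)) (nhds (R t₀ x₀)) := by
    have hca : ContinuousAt (fun t : ℝ => R t x₀) t₀ :=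
      (hRcont x₀ t₀ ht₀).continuousAt (isOpen_Ioi.mem_nhds ht₀)
    exact hca.comp (x := (t₀, x₀)) continuous_fst.continuousAt
  have h2 : Filter.Tendsto (fun p : ℝ × X => R p.1 (p.2 - x₀)) (nhds (t₀, x₀)) (nhds 0) := by
    apply squeeze_zero_norm' (a := fun p : ℝ × X => C * ‖p.2 - x₀‖)
    · have hmem : ∀ᶠ p : ℝ × X in nhds (t₀, x₀), p.1 ∈ K :=
        (continuous_fst.tendsto _) hKnhds
      filter_upwards [hmem] with p hp
      calc ‖R p.1 (p.2 - x₀)‖ ≤ ‖R p.1‖ * ‖p.2 - x₀‖ := (R p.1).le_opNorm _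
        _ ≤ C * ‖p.2 - x₀‖ := by
            apply mul_le_mul_of_nonneg_right (hC ⟨p.1, hp⟩) (norm_nonneg _)
    · have : Filter.Tendsto (fun p : ℝ × X => p.2 - x₀) (nhds (t₀, x₀)) (nhds (x₀ - x₀)) :=
        (continuous_snd.sub continuous_const).tendsto _
      rw [sub_self] at this
      have := (this.norm).const_mul C
      simpa using this
  apply ContinuousWithinAt.mono_of_mem_nhdsWithin
  · show ContinuousWithinAt _ Set.univ _
    rw [continuousWithinAt_univ]
    have : Filter.Tendsto (fun p : ℝ × X => R p.1 x₀ + R p.1 (p.2 - x₀)) (nhds (t₀, x₀))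
        (nhds (R t₀ x₀ + 0)) := h1.add h2
    rw [add_zero] at this
    apply this.congr
    intro p
    rw [← map_add]
    congr 1
    abel
  · exact Filter.univ_mem


/-- If `ρ₂(t) ≤ g(s) ρ₂(t-s)` for `0 ≤ s ≤ t`, and `(R(t))_{t>0}` is a
strongly continuous operator family with `∫_0^∞ (1+g(s))‖R(s)‖ ds < ∞`, then for every
`f ∈ PAP_0([0,∞), X, ρ₁, ρ₂)` the finite convolution `F(t) := ∫_0^t R(t-s) f(s) ds`
belongs to `PAP_0([0,∞), X, ρ₁, ρ₂)`. -/
theorem finite_convolution_PAP0_half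
    {X : Type*} [NormedAddCommGroup X] [NormedSpace ℂ X] [CompleteSpace X]
    (ρ₁ ρ₂ : ℝ → ℝ) (hρ₁ : IsWeightUInftyHalf ρ₁) (hρ₂ : IsWeightUInftyHalf ρ₂)
    (g : ℝ → ℝ) (hgmeas : Measurable g) (hgnonneg : ∀ s ≥ (0:ℝ), 0 ≤ g s)
    (hgρ : ∀ s t : ℝ, 0 ≤ s → s ≤ t → ρ₂ t ≤ g s * ρ₂ (t - s))
    (R : ℝ → X →L[ℂ] X)
    (hRcont : ∀ x : X, ContinuousOn (fun t : ℝ => R t x) (Set.Ioi 0))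
    (hR : IntegrableOn (fun s : ℝ => (1 + g s) * ‖R s‖) (Set.Ioi 0) volume)
    (f : ℝ → X) (hf : MemPAP0Half ρ₁ ρ₂ f)
    (F : ℝ → X) (hF : ∀ t : ℝ, F t = ∫ s in (0:ℝ)..t, R (t - s) (f s)) :
    MemPAP0Half ρ₁ ρ₂ F := by
  obtain ⟨hfc, ⟨C₀, hC₀⟩, hflim⟩ := hf
  set C : ℝ := max C₀ 0 with hCdef
  have hCnn : (0:ℝ) ≤ C := le_max_right _ _
  have hC : ∀ t ≥ (0:ℝ), ‖f t‖ ≤ C := fun t ht => (hC₀ t ht).trans (le_max_left _ _)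
  set r : ℝ → ℝ := fun s => ‖R s‖ with hrdef
  have hrnn : ∀ s, 0 ≤ r s := fun s => norm_nonneg _
  -- measurability of r
  have hr_meas : AEStronglyMeasurable r (volume.restrict (Set.Ioi 0)) := by
    have h1 : AEStronglyMeasurable (fun s => (1 + g s) * r s) (volume.restrict (Set.Ioi 0)) :=
      hR.aestronglyMeasurable
    have h2 : AEStronglyMeasurable (fun s => (1 + g s)) (volume.restrict (Set.Ioi 0)) :=
      (measurable_const.add hgmeas).aestronglyMeasurable
    apply (h1.aemeasurable.div h2.aemeasurable).aestronglyMeasurable.congr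
    filter_upwards [ae_restrict_mem measurableSet_Ioi] with s hs
    have h3 : (0:ℝ) < 1 + g s := by have := hgnonneg s (le_of_lt hs); linarith
    exact mul_div_cancel_left₀ _ (ne_of_gt h3)
  -- integrability of r and g * r on Ioi 0
  have hr_int : IntegrableOn r (Set.Ioi 0) volume := by
    apply hR.mono' hr_meas
    filter_upwards [ae_restrict_mem measurableSet_Ioi] with s hs
    have h1 : (0:ℝ) ≤ g s := hgnonneg s (le_of_lt hs)
    rw [Real.norm_eq_abs, abs_of_nonneg (hrnn s)]
    nlinarith [hrnn s]
  have hgr_meas : AEStronglyMeasurable (fun s => g s * r s) (volume.restrict (Set.Ioi 0)) :=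
    hgmeas.aestronglyMeasurable.mul hr_meas
  have hgr_int : IntegrableOn (fun s => g s * r s) (Set.Ioi 0) volume := by
    apply hR.mono' hgr_meas
    filter_upwards [ae_restrict_mem measurableSet_Ioi] with s hs
    have h1 : (0:ℝ) ≤ g s := hgnonneg s (le_of_lt hs)
    rw [Real.norm_eq_abs, abs_of_nonneg (mul_nonneg h1 (hrnn s))]
    nlinarith [hrnn s]
  -- representation of F as a set integral
  have hrep : ∀ t ≥ (0:ℝ), F t = ∫ u in Set.Ioc 0 t, R u (f (t - u)) := by
    intro t ht
    rw [hF t]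
    have h1 : (∫ s in (0:ℝ)..t, R (t - s) (f s))
        = ∫ s in (0:ℝ)..t, (fun u => R u (f (t - u))) (t - s) := by
      apply intervalIntegral.integral_congr
      intro s _
      simp [sub_sub_cancel]
    rw [h1, intervalIntegral.integral_comp_sub_left (fun u => R u (f (t - u))) t]
    simp only [sub_self, sub_zero]
    exact intervalIntegral.integral_of_le ht
  -- continuity of the integrand in u
  have hcont_integrand : ∀ t > (0:ℝ), ContinuousOn (fun u : ℝ => R u (f (t - u)))
      (Set.Ioc 0 t) := by
    intro t ht
    have hmap : Set.MapsTo (fun u : ℝ => t - u) (Set.Ioc 0 t) (Set.Ici (0:ℝ)) :=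
      fun u hu => by simp only [Set.mem_Ici]; linarith [hu.2]
    have h1 : ContinuousOn (fun u : ℝ => ((u, f (t - u)) : ℝ × X)) (Set.Ioc 0 t) := by
      apply ContinuousOn.prodMk continuousOn_id
      exact hfc.comp ((continuous_const.sub continuous_id).continuousOn) hmap
    refine (strong_cont_joint R hRcont).comp h1 ?_
    intro u hu
    exact ⟨hu.1, Set.mem_univ _⟩
  have hmeas_integrand : ∀ t ≥ (0:ℝ), AEStronglyMeasurable (fun u : ℝ => R u (f (t - u)))
      (volume.restrict (Set.Ioc 0 t)) := by
    intro t ht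
    rcases eq_or_lt_of_le ht with h | h
    · rw [← h, Set.Ioc_self, Measure.restrict_empty]
      exact aestronglyMeasurable_zero_measure _
    · exact (hcont_integrand t h).aestronglyMeasurable measurableSet_Ioc
  -- integrable bound
  have hbound_int : ∀ t : ℝ, IntegrableOn (fun u => C * r u) (Set.Ioc 0 t) volume := by
    intro t
    exact (hr_int.mono_set Set.Ioc_subset_Ioi_self).const_mul C
  have hint_integrand : ∀ t ≥ (0:ℝ), IntegrableOn (fun u : ℝ => R u (f (t - u)))
      (Set.Ioc 0 t) volume := by
    intro t ht
    apply (hbound_int t).mono' (hmeas_integrand t ht)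
    filter_upwards [ae_restrict_mem measurableSet_Ioc] with u hu
    calc ‖R u (f (t - u))‖ ≤ r u * ‖f (t - u)‖ := (R u).le_opNorm _
      _ ≤ r u * C := by
          apply mul_le_mul_of_nonneg_left (hC _ (by linarith [hu.2])) (hrnn u)
      _ = C * r u := mul_comm _ _
  -- indicator representation
  set H : ℝ → ℝ → X := fun t u => (Set.Ioc 0 t).indicator (fun u => R u (f (t - u))) u
    with hHdef
  have hrepH : ∀ t ≥ (0:ℝ), F t = ∫ u in Set.Ioi (0:ℝ), H t u := by
    intro t ht
    simp only [hHdef]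
    rw [setIntegral_indicator measurableSet_Ioc,
      Set.inter_eq_self_of_subset_right Set.Ioc_subset_Ioi_self]
    exact hrep t ht
  have hH_meas : ∀ t ≥ (0:ℝ), AEStronglyMeasurable (H t) (volume.restrict (Set.Ioi 0)) := by
    intro t ht
    simp only [hHdef]
    rw [aestronglyMeasurable_indicator_iff measurableSet_Ioc, Measure.restrict_restrict
      measurableSet_Ioc, Set.inter_eq_self_of_subset_left Set.Ioc_subset_Ioi_self]
    exact hmeas_integrand t ht
  have hH_bound : ∀ t ≥ (0:ℝ), ∀ᵐ u ∂(volume.restrict (Set.Ioi 0)), ‖H t u‖ ≤ C * r u := by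
    intro t ht
    filter_upwards [ae_restrict_mem measurableSet_Ioi] with u hu
    simp only [hHdef]
    by_cases hmem : u ∈ Set.Ioc 0 t
    · rw [Set.indicator_of_mem hmem]
      calc ‖R u (f (t - u))‖ ≤ r u * ‖f (t - u)‖ := (R u).le_opNorm _
        _ ≤ r u * C := mul_le_mul_of_nonneg_left (hC _ (by linarith [hmem.2])) (hrnn u)
        _ = C * r u := mul_comm _ _
    · rw [Set.indicator_of_notMem hmem]
      simp only [norm_zero]
      exact mul_nonneg hCnn (hrnn u)
  -- Part 1: continuity of F on [0, ∞)
  have hFcont : ContinuousOn F (Set.Ici 0) := by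
    intro t₀ ht₀
    have ht₀' : (0:ℝ) ≤ t₀ := ht₀
    have hconv : Filter.Tendsto (fun t => ∫ u in Set.Ioi (0:ℝ), H t u)
        (nhdsWithin t₀ (Set.Ici 0)) (nhds (∫ u in Set.Ioi (0:ℝ), H t₀ u)) := by
      apply tendsto_integral_filter_of_dominated_convergence (fun u => C * r u)
      · filter_upwards [self_mem_nhdsWithin] with t ht
        exact hH_meas t ht
      · filter_upwards [self_mem_nhdsWithin] with t ht
        exact hH_bound t ht
      · exact hr_int.const_mul C
      · have hne : ∀ᵐ u ∂(volume.restrict (Set.Ioi (0:ℝ))), u ≠ t₀ := by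
          apply ae_restrict_of_ae
          rw [ae_iff]
          have : {a : ℝ | ¬ a ≠ t₀} = {t₀} := by ext a; simp
          rw [this]
          exact measure_singleton t₀
        filter_upwards [hne, ae_restrict_mem measurableSet_Ioi] with u hu hu0
        rcases lt_or_gt_of_ne hu with hlt | hgt
        · -- u < t₀
          have hev : ∀ᶠ t in nhdsWithin t₀ (Set.Ici 0), u < t :=
            nhdsWithin_le_nhds (eventually_gt_nhds hlt)
          have hHt₀ : H t₀ u = R u (f (t₀ - u)) := by
            simp only [hHdef]; exact Set.indicator_of_mem (Set.mem_Ioc.mpr ⟨hu0, hlt.le⟩) _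
          rw [hHt₀]
          have htend : Filter.Tendsto (fun t => t - u) (nhdsWithin t₀ (Set.Ici 0))
              (nhdsWithin (t₀ - u) (Set.Ici 0)) := by
            rw [tendsto_nhdsWithin_iff]
            constructor
            · exact ((continuous_id.sub continuous_const).tendsto t₀).mono_left
                nhdsWithin_le_nhds
            · filter_upwards [hev] with t ht
              simp only [Set.mem_Ici]
              linarith
          have h2 : Filter.Tendsto (fun t => R u (f (t - u))) (nhdsWithin t₀ (Set.Ici 0))
              (nhds (R u (f (t₀ - u)))) :=
            ((R u).continuous.tendsto _).comp
              (((hfc (t₀ - u) (by simp only [Set.mem_Ici]; linarith)).tendsto).comp htend)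
          apply h2.congr'
          filter_upwards [hev] with t ht
          simp only [hHdef]
          rw [Set.indicator_of_mem (Set.mem_Ioc.mpr ⟨hu0, ht.le⟩)]
        · -- u > t₀
          have hev : ∀ᶠ t in nhdsWithin t₀ (Set.Ici 0), t < u :=
            nhdsWithin_le_nhds (eventually_lt_nhds hgt)
          have hHt₀ : H t₀ u = 0 := by
            simp only [hHdef]
            exact Set.indicator_of_notMem (fun hmem => absurd hmem.2 (not_le.2 hgt)) _
          rw [hHt₀]
          apply Filter.Tendsto.congr' _ tendsto_const_nhds
          filter_upwards [hev] with t ht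
          simp only [hHdef]
          exact (Set.indicator_of_notMem (fun hmem => absurd hmem.2 (not_le.2 ht)) _).symm
    rw [ContinuousWithinAt, hrepH t₀ ht₀']
    apply hconv.congr'
    filter_upwards [self_mem_nhdsWithin] with t ht
    exact (hrepH t ht).symm
  -- Part 2: boundedness of F on [0, ∞)
  set B : ℝ := C * ∫ u in Set.Ioi (0:ℝ), r u with hBdef
  have hFbdd : ∀ t ≥ (0:ℝ), ‖F t‖ ≤ B := by
    intro t ht
    rw [hrep t ht]
    calc ‖∫ u in Set.Ioc 0 t, R u (f (t - u))‖ ≤ ∫ u in Set.Ioc 0 t, C * r u := by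
          apply norm_integral_le_of_norm_le (hbound_int t)
          filter_upwards [ae_restrict_mem measurableSet_Ioc] with u hu
          calc ‖R u (f (t - u))‖ ≤ r u * ‖f (t - u)‖ := (R u).le_opNorm _
            _ ≤ r u * C := mul_le_mul_of_nonneg_left (hC _ (by linarith [hu.2])) (hrnn u)
            _ = C * r u := mul_comm _ _
      _ ≤ ∫ u in Set.Ioi 0, C * r u := by
          apply setIntegral_mono_set (hr_int.const_mul C)
          · exact Filter.Eventually.of_forall fun u => mul_nonneg hCnn (hrnn u)
          · exact Filter.Eventually.of_forall Set.Ioc_subset_Ioi_self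
      _ = B := by rw [hBdef]; exact integral_const_mul C r
  refine ⟨hFcont, ⟨B, hFbdd⟩, ?_⟩
  have hBnn : (0:ℝ) ≤ B := (norm_nonneg (F 0)).trans (hFbdd 0 le_rfl)
  -- nonnegativity of ρ₂ a.e. on subsets of [0,∞)
  have hρ₂nn : ∀ s : Set ℝ, s ⊆ Set.Ici (0:ℝ) →
      ∀ᵐ t ∂(volume.restrict s), 0 ≤ ρ₂ t := by
    intro s hs
    filter_upwards [ae_restrict_of_ae_restrict_of_subset hs hρ₂.2.1] with t ht
    exact ht.le
  have hρ₂int : ∀ T : ℝ, IntegrableOn ρ₂ (Set.Ioc (0:ℝ) T) volume := fun T => (hρ₂.1 0 T).1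
  -- integrability of the weighted norms
  have hfρint : ∀ T ≥ (0:ℝ), IntegrableOn (fun t => ‖f t‖ * ρ₂ t) (Set.Ioc 0 T) volume := by
    intro T hT
    have haesm : AEStronglyMeasurable (fun t => ‖f t‖ * ρ₂ t)
        (volume.restrict (Set.Ioc (0:ℝ) T)) :=
      (((hfc.mono (Set.Ioc_subset_Icc_self.trans Set.Icc_subset_Ici_self)).norm).aestronglyMeasurable
        measurableSet_Ioc).mul (hρ₂int T).aestronglyMeasurable
    apply (((hρ₂int T).abs).const_mul C).mono' haesm
    filter_upwards [ae_restrict_mem measurableSet_Ioc] with t ht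
    rw [Real.norm_eq_abs, abs_mul, abs_norm]
    exact mul_le_mul_of_nonneg_right (hC t ht.1.le) (abs_nonneg _)
  have hFρint : ∀ T ≥ (0:ℝ), IntegrableOn (fun t => ‖F t‖ * ρ₂ t) (Set.Ioc 0 T) volume := by
    intro T hT
    have haesm : AEStronglyMeasurable (fun t => ‖F t‖ * ρ₂ t)
        (volume.restrict (Set.Ioc (0:ℝ) T)) :=
      (((hFcont.mono (Set.Ioc_subset_Icc_self.trans Set.Icc_subset_Ici_self)).norm).aestronglyMeasurable
        measurableSet_Ioc).mul (hρ₂int T).aestronglyMeasurable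
    apply (((hρ₂int T).abs).const_mul B).mono' haesm
    filter_upwards [ae_restrict_mem measurableSet_Ioc] with t ht
    rw [Real.norm_eq_abs, abs_mul, abs_norm]
    exact mul_le_mul_of_nonneg_right (hFbdd t ht.1.le) (abs_nonneg _)
  set K : ℝ := ∫ u in Set.Ioi (0:ℝ), g u * r u with hKdef
  have hK0 : 0 ≤ K := setIntegral_nonneg measurableSet_Ioi
    (fun u hu => mul_nonneg (hgnonneg u (le_of_lt hu)) (hrnn u))
  have hJnn : ∀ T ≥ (0:ℝ), 0 ≤ ∫ t in (0:ℝ)..T, ‖f t‖ * ρ₂ t := by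
    intro T hT
    apply intervalIntegral.integral_nonneg_of_ae_restrict hT
    filter_upwards [hρ₂nn (Set.Icc 0 T) Set.Icc_subset_Ici_self] with t ht
    exact mul_nonneg (norm_nonneg _) ht
  have hInn : ∀ T ≥ (0:ℝ), 0 ≤ ∫ t in (0:ℝ)..T, ‖F t‖ * ρ₂ t := by
    intro T hT
    apply intervalIntegral.integral_nonneg_of_ae_restrict hT
    filter_upwards [hρ₂nn (Set.Icc 0 T) Set.Icc_subset_Ici_self] with t ht
    exact mul_nonneg (norm_nonneg _) ht
  -- the key inequality
  have key : ∀ T ≥ (0:ℝ), (∫ t in (0:ℝ)..T, ‖F t‖ * ρ₂ t)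
      ≤ K * ∫ t in (0:ℝ)..T, ‖f t‖ * ρ₂ t := by
    intro T hT
    set A : ℝ → ENNReal := fun u => ENNReal.ofReal (g u * r u) with hAdef
    set Bf : ℝ → ENNReal := fun v => ENNReal.ofReal (‖f v‖ * ρ₂ v) with hBfdef
    have hA_aem : AEMeasurable A (volume.restrict (Set.Ioi 0)) :=
      ((hgmeas.aemeasurable).mul hr_meas.aemeasurable).ennreal_ofReal
    set Atil := hA_aem.mk A with hAtil
    have hAtilmeas : Measurable Atil := hA_aem.measurable_mk
    have hAtileq : A =ᵐ[volume.restrict (Set.Ioi 0)] Atil := hA_aem.ae_eq_mk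
    have hBI_aem : AEMeasurable ((Set.Icc (0:ℝ) T).indicator Bf) volume := by
      rw [aemeasurable_indicator_iff measurableSet_Icc]
      apply AEMeasurable.ennreal_ofReal
      apply AEMeasurable.mul
      · exact ((hfc.mono Set.Icc_subset_Ici_self).norm.aestronglyMeasurable
          measurableSet_Icc).aemeasurable
      · have h1 : IntegrableOn ρ₂ (Set.Ioc (-1 : ℝ) T) volume := (hρ₂.1 (-1) T).1
        refine h1.aestronglyMeasurable.aemeasurable.mono_measure
          (Measure.restrict_mono (fun x hx => ?_) le_rfl)
        rcases Set.mem_Icc.mp hx with ⟨hx1, hx2⟩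
        exact Set.mem_Ioc.mpr ⟨by linarith, hx2⟩
    set Btil := hBI_aem.mk _ with hBtil
    have hBtilmeas : Measurable Btil := hBI_aem.measurable_mk
    have hBtileq : (Set.Icc (0:ℝ) T).indicator Bf =ᵐ[volume] Btil := hBI_aem.ae_eq_mk
    set P : ℝ → ℝ → ENNReal :=
      fun t u => (Set.Ioc 0 t).indicator (fun u => Atil u * Btil (t - u)) u with hPdef
    have hPmeas : Measurable (Function.uncurry P) := by
      have hPuncurry : Function.uncurry P = fun p : ℝ × ℝ =>
          ({q : ℝ × ℝ | 0 < q.2 ∧ q.2 ≤ q.1}.indicator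
            (fun q => Atil q.2 * Btil (q.1 - q.2))) p := by
        funext p
        rcases p with ⟨t, u⟩
        simp only [Function.uncurry, hPdef]
        by_cases hmem : u ∈ Set.Ioc 0 t
        · rw [Set.indicator_of_mem hmem,
            Set.indicator_of_mem (show (t, u) ∈ {q : ℝ × ℝ | 0 < q.2 ∧ q.2 ≤ q.1} from
              ⟨hmem.1, hmem.2⟩)]
        · rw [Set.indicator_of_notMem hmem, Set.indicator_of_notMem
            (show (t, u) ∉ {q : ℝ × ℝ | 0 < q.2 ∧ q.2 ≤ q.1} from
              fun h => hmem ⟨h.1, h.2⟩)]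
      rw [hPuncurry]
      apply Measurable.indicator
      · exact (hAtilmeas.comp measurable_snd).mul
          (hBtilmeas.comp (measurable_fst.sub measurable_snd))
      · exact (measurableSet_lt measurable_const measurable_snd).inter
          (measurableSet_le measurable_snd measurable_fst)
    set L : ENNReal := ∫⁻ v in Set.Icc (0:ℝ) T, Btil v with hLdef
    have hL : L = ENNReal.ofReal (∫ t in Set.Ioc (0:ℝ) T, ‖f t‖ * ρ₂ t) := by
      have e1 : L = ∫⁻ v in Set.Icc (0:ℝ) T, (Set.Icc (0:ℝ) T).indicator Bf v :=
        lintegral_congr_ae (hBtileq.symm.restrict)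
      have e2 : (∫⁻ v in Set.Icc (0:ℝ) T, (Set.Icc (0:ℝ) T).indicator Bf v)
          = ∫⁻ v in Set.Icc (0:ℝ) T, Bf v :=
        setLIntegral_congr_fun measurableSet_Icc
          (fun v hv => Set.indicator_of_mem hv _)
      have e3 : (∫⁻ v in Set.Icc (0:ℝ) T, Bf v) = ∫⁻ v in Set.Ioc (0:ℝ) T, Bf v :=
        (setLIntegral_congr Ioc_ae_eq_Icc).symm
      have e4 : (∫⁻ v in Set.Ioc (0:ℝ) T, Bf v)
          = ENNReal.ofReal (∫ t in Set.Ioc (0:ℝ) T, ‖f t‖ * ρ₂ t) := by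
        refine (ofReal_integral_eq_lintegral_ofReal (hfρint T hT) ?_).symm
        filter_upwards [hρ₂nn (Set.Ioc 0 T) (Set.Ioc_subset_Icc_self.trans Set.Icc_subset_Ici_self)] with t ht
        exact mul_nonneg (norm_nonneg _) ht
      rw [e1, e2, e3, e4]
    have main : ENNReal.ofReal (∫ t in Set.Ioc (0:ℝ) T, ‖F t‖ * ρ₂ t)
        ≤ ENNReal.ofReal K * ENNReal.ofReal (∫ t in Set.Ioc (0:ℝ) T, ‖f t‖ * ρ₂ t) := by
      calc ENNReal.ofReal (∫ t in Set.Ioc (0:ℝ) T, ‖F t‖ * ρ₂ t)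
          = ∫⁻ t in Set.Ioc (0:ℝ) T, ENNReal.ofReal (‖F t‖ * ρ₂ t) := by
            apply ofReal_integral_eq_lintegral_ofReal (hFρint T hT)
            filter_upwards [hρ₂nn (Set.Ioc 0 T) (Set.Ioc_subset_Icc_self.trans Set.Icc_subset_Ici_self)] with t ht
            exact mul_nonneg (norm_nonneg _) ht
        _ ≤ ∫⁻ t in Set.Ioc (0:ℝ) T, ∫⁻ u in Set.Ioc (0:ℝ) t, A u * Bf (t - u) := by
            apply lintegral_mono_ae
            filter_upwards [ae_restrict_mem measurableSet_Ioc,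
              hρ₂nn (Set.Ioc 0 T) (Set.Ioc_subset_Icc_self.trans Set.Icc_subset_Ici_self)] with t htmem hρt
            have ht0 : (0:ℝ) < t := htmem.1
            have haes : AEStronglyMeasurable (fun u => r u * ‖f (t - u)‖)
                (volume.restrict (Set.Ioc 0 t)) := by
              apply AEStronglyMeasurable.mul
              · exact hr_meas.mono_measure
                  (Measure.restrict_mono Set.Ioc_subset_Ioi_self le_rfl)
              · exact ((hfc.comp ((continuous_const.sub continuous_id).continuousOn)
                  (fun u hu => by simp only [Set.mem_Ici, id_eq, Pi.sub_apply]; linarith [hu.2])).norm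
                  ).aestronglyMeasurable measurableSet_Ioc
            have hN_int : IntegrableOn (fun u => r u * ‖f (t - u)‖) (Set.Ioc 0 t) volume := by
              apply (hbound_int t).mono' haes
              filter_upwards [ae_restrict_mem measurableSet_Ioc] with u hu
              rw [Real.norm_eq_abs, abs_of_nonneg (mul_nonneg (hrnn u) (norm_nonneg _))]
              calc r u * ‖f (t - u)‖
                  ≤ r u * C := mul_le_mul_of_nonneg_left (hC _ (by linarith [hu.2])) (hrnn u)
                _ = C * r u := mul_comm _ _
            have hFle : ‖F t‖ ≤ ∫ u in Set.Ioc 0 t, r u * ‖f (t - u)‖ := by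
              rw [hrep t ht0.le]
              exact norm_integral_le_of_norm_le hN_int
                (Filter.Eventually.of_forall fun u => (R u).le_opNorm _)
            calc ENNReal.ofReal (‖F t‖ * ρ₂ t)
                ≤ ENNReal.ofReal ((∫ u in Set.Ioc 0 t, r u * ‖f (t - u)‖) * ρ₂ t) :=
                  ENNReal.ofReal_le_ofReal (mul_le_mul_of_nonneg_right hFle hρt)
              _ = ENNReal.ofReal (∫ u in Set.Ioc 0 t, (r u * ‖f (t - u)‖) * ρ₂ t) := by
                  rw [← integral_mul_const]
              _ = ∫⁻ u in Set.Ioc 0 t, ENNReal.ofReal ((r u * ‖f (t - u)‖) * ρ₂ t) := by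
                  apply ofReal_integral_eq_lintegral_ofReal (hN_int.mul_const _)
                  exact Filter.Eventually.of_forall fun u =>
                    mul_nonneg (mul_nonneg (hrnn u) (norm_nonneg _)) hρt
              _ ≤ ∫⁻ u in Set.Ioc 0 t, A u * Bf (t - u) := by
                  apply lintegral_mono_ae
                  filter_upwards [ae_restrict_mem measurableSet_Ioc] with u hu
                  have h1 : ρ₂ t ≤ g u * ρ₂ (t - u) := hgρ u t hu.1.le hu.2
                  calc ENNReal.ofReal ((r u * ‖f (t - u)‖) * ρ₂ t)
                      ≤ ENNReal.ofReal ((r u * ‖f (t - u)‖) * (g u * ρ₂ (t - u))) :=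
                        ENNReal.ofReal_le_ofReal (mul_le_mul_of_nonneg_left h1
                          (mul_nonneg (hrnn u) (norm_nonneg _)))
                    _ = A u * Bf (t - u) := by
                        rw [hAdef, hBfdef]
                        simp only []
                        rw [← ENNReal.ofReal_mul (mul_nonneg (hgnonneg u hu.1.le) (hrnn u))]
                        congr 1
                        ring
        _ = ∫⁻ t in Set.Ioc (0:ℝ) T, ∫⁻ u, P t u := by
            apply setLIntegral_congr_fun measurableSet_Ioc
            intro t htmem
            have ha : A =ᵐ[volume.restrict (Set.Ioc 0 t)] Atil :=
              ae_restrict_of_ae_restrict_of_subset Set.Ioc_subset_Ioi_self hAtileq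
            have h0 : (fun u : ℝ => Btil (t - u))
                =ᵐ[volume] (fun u => (Set.Icc (0:ℝ) T).indicator Bf (t - u)) := by
              have h2 := (Measure.measurePreserving_sub_left volume
                t).quasiMeasurePreserving.ae_eq_comp hBtileq.symm
              exact h2
            have hb : (fun u : ℝ => Btil (t - u))
                =ᵐ[volume.restrict (Set.Ioc 0 t)] (fun u => Bf (t - u)) := by
              filter_upwards [h0.restrict, ae_restrict_mem measurableSet_Ioc] with u h1 h2
              rw [h1, Set.indicator_of_mem]
              exact ⟨by linarith [h2.2], by linarith [h2.1, htmem.2]⟩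
            have e1 : (∫⁻ u in Set.Ioc (0:ℝ) t, A u * Bf (t - u))
                = ∫⁻ u in Set.Ioc (0:ℝ) t, Atil u * Btil (t - u) := by
              apply lintegral_congr_ae
              filter_upwards [ha, hb] with u h1 h2
              rw [← h1, ← h2]
            beta_reduce
            rw [e1, hPdef]
            simp only []
            rw [← lintegral_indicator measurableSet_Ioc]
        _ = ∫⁻ u, ∫⁻ t in Set.Ioc (0:ℝ) T, P t u := lintegral_lintegral_swap hPmeas.aemeasurable
        _ ≤ ∫⁻ u, (Set.Ioi (0:ℝ)).indicator (fun u => Atil u * L) u := by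
            apply lintegral_mono
            intro u
            by_cases hu : u ∈ Set.Ioi (0:ℝ)
            · rw [Set.indicator_of_mem hu]
              have hu0 : (0:ℝ) < u := hu
              have e2 : ∀ t, P t u
                  = (Set.Ici u).indicator (fun t => Atil u * Btil (t - u)) t := by
                intro t
                simp only [hPdef]
                by_cases h : u ∈ Set.Ioc 0 t
                · rw [Set.indicator_of_mem h, Set.indicator_of_mem (Set.mem_Ici.mpr h.2)]
                · rw [Set.indicator_of_notMem h, Set.indicator_of_notMem
                    (fun hmem => h ⟨hu0, Set.mem_Ici.mp hmem⟩)]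
              simp only [e2]
              calc ∫⁻ t in Set.Ioc (0:ℝ) T, (Set.Ici u).indicator
                    (fun t => Atil u * Btil (t - u)) t
                  = ∫⁻ t in Set.Ici u ∩ Set.Ioc (0:ℝ) T, Atil u * Btil (t - u) := by
                    rw [lintegral_indicator measurableSet_Ici,
                      Measure.restrict_restrict measurableSet_Ici]
                _ ≤ ∫⁻ t in Set.Icc u T, Atil u * Btil (t - u) := by
                    apply lintegral_mono_set
                    intro x hx
                    exact ⟨hx.1, hx.2.2⟩
                _ = Atil u * ∫⁻ t in Set.Icc u T, Btil (t - u) :=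
                    lintegral_const_mul _ (hBtilmeas.comp (measurable_id.sub measurable_const))
                _ = Atil u * ∫⁻ v in Set.Icc 0 (T - u), Btil v := by
                    congr 1
                    rw [← lintegral_indicator measurableSet_Icc,
                      ← lintegral_indicator measurableSet_Icc]
                    have hptw : ∀ t : ℝ, (Set.Icc u T).indicator (fun t => Btil (t - u)) t
                        = (Set.Icc (0:ℝ) (T - u)).indicator Btil (t + -u) := by
                      intro t
                      by_cases h : t ∈ Set.Icc u T
                      · rw [Set.indicator_of_mem h, Set.indicator_of_mem
                          (show t + -u ∈ Set.Icc (0:ℝ) (T - u) from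
                            ⟨by linarith [h.1], by linarith [h.2]⟩)]
                        norm_num [sub_eq_add_neg]
                      · rw [Set.indicator_of_notMem h, Set.indicator_of_notMem
                          (fun hmem => h ⟨by linarith [hmem.1], by linarith [hmem.2]⟩)]
                    simp_rw [hptw]
                    exact lintegral_add_right_eq_self
                      (fun v => (Set.Icc (0:ℝ) (T - u)).indicator Btil v) (-u)
                _ ≤ Atil u * L := by
                    apply mul_le_mul_right
                    apply lintegral_mono_set
                    exact Set.Icc_subset_Icc_right (by linarith)
            · rw [Set.indicator_of_notMem hu]
              have hz : ∀ t, P t u = 0 := by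
                intro t
                simp only [hPdef]
                exact Set.indicator_of_notMem (fun h => hu h.1) _
              simp [hz]
        _ = (∫⁻ u in Set.Ioi (0:ℝ), Atil u) * L := by
            rw [lintegral_indicator measurableSet_Ioi]
            exact lintegral_mul_const _ hAtilmeas
        _ = ENNReal.ofReal K * ENNReal.ofReal (∫ t in Set.Ioc (0:ℝ) T, ‖f t‖ * ρ₂ t) := by
            rw [← hL]
            congr 1
            rw [← lintegral_congr_ae hAtileq]
            refine (ofReal_integral_eq_lintegral_ofReal hgr_int ?_).symm
            filter_upwards [ae_restrict_mem measurableSet_Ioi] with u hu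
            exact mul_nonneg (hgnonneg u (le_of_lt hu)) (hrnn u)
    -- conclude over ℝ
    have hJ' : 0 ≤ ∫ t in Set.Ioc (0:ℝ) T, ‖f t‖ * ρ₂ t := by
      have := hJnn T hT
      rwa [intervalIntegral.integral_of_le hT] at this
    rw [intervalIntegral.integral_of_le hT, intervalIntegral.integral_of_le hT]
    rw [← ENNReal.ofReal_mul hK0] at main
    exact (ENNReal.ofReal_le_ofReal_iff (mul_nonneg hK0 hJ')).mp main
  -- squeeze argument
  have hev : ∀ᶠ T in Filter.atTop, (1:ℝ) ≤ ∫ t in (0:ℝ)..T, ρ₁ t :=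
    hρ₁.2.2.eventually_ge_atTop 1
  have hev0 : ∀ᶠ T : ℝ in Filter.atTop, (0:ℝ) ≤ T := Filter.eventually_ge_atTop 0
  have hlim2 : Filter.Tendsto (fun T : ℝ =>
      K * ((1 / ∫ t in (0:ℝ)..T, ρ₁ t) * ∫ t in (0:ℝ)..T, ‖f t‖ * ρ₂ t))
      Filter.atTop (nhds 0) := by
    have := hflim.const_mul K
    simpa using this
  apply tendsto_of_tendsto_of_tendsto_of_le_of_le' tendsto_const_nhds hlim2
  · filter_upwards [hev, hev0] with T h1 h0
    have hpos : (0:ℝ) < ∫ t in (0:ℝ)..T, ρ₁ t := lt_of_lt_of_le one_pos h1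
    exact mul_nonneg (by positivity) (hInn T h0)
  · filter_upwards [hev, hev0] with T h1 h0
    have hpos : (0:ℝ) < ∫ t in (0:ℝ)..T, ρ₁ t := lt_of_lt_of_le one_pos h1
    have h2 : (0:ℝ) ≤ 1 / ∫ t in (0:ℝ)..T, ρ₁ t := by positivity
    calc (1 / ∫ t in (0:ℝ)..T, ρ₁ t) * ∫ t in (0:ℝ)..T, ‖F t‖ * ρ₂ t
        ≤ (1 / ∫ t in (0:ℝ)..T, ρ₁ t) * (K * ∫ t in (0:ℝ)..T, ‖f t‖ * ρ₂ t) :=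
          mul_le_mul_of_nonneg_left (key T h0) h2
      _ = K * ((1 / ∫ t in (0:ℝ)..T, ρ₁ t) * ∫ t in (0:ℝ)..T, ‖f t‖ * ρ₂ t) := by ring
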